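/- Let a_1, ..., a_d be vectors in R^d forming the columns of an invertible matrix A, and let t be a unit vector achieving ‖At‖ = 1/‖A^{-1}‖. If t_1 is a coordinate of t of largest absolute value, then |t_1| ≥ 1/√d and dist(a_1, span{a_2,...,a_d}) ≤ √d / ‖A^{-1}‖. -/

import Mathlib

open Matrix MeasureTheory
open scoped RealInnerProductSpace ENNReal NNReal

/-- Operator norm of a matrix acting on Euclidean space. -/
noncomputable def opNorm {d : ℕ} (A : Matrix (Fin d) (Fin d) ℝ) : ℝ :=
  ‖Matrix.toEuclideanCLM (𝕜 := ℝ) A‖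

/-- Euclidean distance from the `i`-th vector to the span of the others. -/
noncomputable def colDist {d : ℕ} (a : Fin d → EuclideanSpace ℝ (Fin d)) (i : Fin d) : ℝ :=
  Metric.infDist (a i) (Submodule.span ℝ (a '' {j | j ≠ i}) : Set (EuclideanSpace ℝ (Fin d)))

/-- `height` of a tuple of vectors: minimal distance of one vector to the span of the rest. -/
noncomputable def height {d : ℕ} (a : Fin d → EuclideanSpace ℝ (Fin d)) : ℝ :=
  ⨅ i, colDist a i

theorem max_coord_and_dist_bound {d : ℕ} (hd : 0 < d)
    (a : Fin d → EuclideanSpace ℝ (Fin d)) (A : Matrix (Fin d) (Fin d) ℝ)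
    (hA : A = Matrix.of fun i j => a j i) (hinv : IsUnit A)
    (t : EuclideanSpace ℝ (Fin d)) (ht : ‖t‖ = 1)
    (hAt : ‖Matrix.toEuclideanCLM (𝕜 := ℝ) A t‖ = 1 / opNorm A⁻¹)
    (i : Fin d) (hi : ∀ j, |t j| ≤ |t i|) :
    1 / Real.sqrt d ≤ |t i| ∧ colDist a i ≤ Real.sqrt d / opNorm A⁻¹ := by
  have hdpos : (0 : ℝ) < d := by exact_mod_cast hd
  have hsd : (0:ℝ) < Real.sqrt d := Real.sqrt_pos.mpr hdpos
  -- part 1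
  have hsum : (1:ℝ) = ∑ j, (t j)^2 := by
    have := EuclideanSpace.norm_eq t
    rw [ht] at this
    have h2 : Real.sqrt (∑ j, ‖t j‖ ^ 2) = 1 := this.symm
    have := congrArg (· ^ 2) h2
    simp only [Real.sq_sqrt (Finset.sum_nonneg fun j _ => sq_nonneg _)] at this
    simpa [Real.norm_eq_abs, sq_abs] using this.symm
  have hbound : (1:ℝ) ≤ d * (t i)^2 := by
    rw [hsum]
    calc ∑ j, (t j)^2 ≤ ∑ _j : Fin d, (t i)^2 := by
          apply Finset.sum_le_sum
          intro j _
          have := hi j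
          nlinarith [abs_nonneg (t j), abs_nonneg (t i), sq_abs (t j), sq_abs (t i)]
      _ = d * (t i)^2 := by simp [mul_comm]
  have h1 : 1 / Real.sqrt d ≤ |t i| := by
    rw [div_le_iff₀ hsd]
    have : (1:ℝ) ≤ Real.sqrt (d * (t i)^2) := by
      rw [show (1:ℝ) = Real.sqrt 1 by simp]
      exact Real.sqrt_le_sqrt hbound
    rwa [Real.sqrt_mul hdpos.le, Real.sqrt_sq_eq_abs, mul_comm] at this
  refine ⟨h1, ?_⟩
  have hti : (0:ℝ) < |t i| := lt_of_lt_of_le (by positivity) h1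
  -- the key identity: A t = ∑ j, t j • a j
  set u := Matrix.toEuclideanCLM (𝕜 := ℝ) A t with hu_def
  have hu : u = ∑ j, t j • a j := by
    have key := Matrix.ofLp_toEuclideanCLM (𝕜 := ℝ) A t
    ext i'
    have h3 : u i' = (Matrix.toLin' A) ((WithLp.equiv 2 _) t) i' := by
      rw [hu_def, key]; rfl
    rw [h3]
    have h4 : (∑ x : Fin d, t x • a x) i' = ∑ x : Fin d, t x * a x i' := by
      induction (Finset.univ : Finset (Fin d)) using Finset.induction with
      | empty => simp
      | insert _ _ h ih =>
        rw [Finset.sum_insert h, Finset.sum_insert h, ← ih]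
        rfl
    rw [h4]
    simp [Matrix.toLin'_apply, Matrix.mulVec, dotProduct, hA, mul_comm]
  -- build the approximating element
  set y : EuclideanSpace ℝ (Fin d) :=
    ∑ j ∈ Finset.univ \ {i}, (-(t i)⁻¹ * t j) • a j with hy_def
  have hy_mem : y ∈ (Submodule.span ℝ (a '' {j | j ≠ i}) : Set (EuclideanSpace ℝ (Fin d))) := by
    apply Submodule.sum_mem
    intro j hj
    simp only [Finset.mem_sdiff, Finset.mem_singleton] at hj
    exact Submodule.smul_mem _ _ (Submodule.subset_span ⟨j, hj.2, rfl⟩)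
  have hdiff : a i - y = (t i)⁻¹ • u := by
    rw [hu, hy_def]
    have hsplit : (∑ j, t j • a j) = t i • a i + ∑ j ∈ Finset.univ \ {i}, t j • a j := by
      rw [← Finset.sum_sdiff (Finset.subset_univ {i})]
      simp [add_comm]
    rw [hsplit, smul_add, smul_smul, inv_mul_cancel₀ (abs_pos.mp hti), one_smul,
      Finset.smul_sum]
    simp only [smul_smul, neg_mul]
    rw [sub_eq_iff_eq_add]
    abel_nf
    simp [Finset.sum_neg_distrib]
  have hdist : colDist a i ≤ ‖u‖ / |t i| := by
    have := Metric.infDist_le_dist_of_mem (x := a i) hy_mem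
    rw [colDist, dist_eq_norm, hdiff] at *
    calc Metric.infDist (a i) _ ≤ ‖(t i)⁻¹ • u‖ := this
      _ = ‖u‖ / |t i| := by
          rw [norm_smul, Real.norm_eq_abs, abs_inv, div_eq_inv_mul]
  refine hdist.trans ?_
  rw [hAt]
  have hN : (0:ℝ) ≤ opNorm A⁻¹ := norm_nonneg _
  rcases hN.eq_or_lt with h0 | h0
  · simp [← h0]
  · rw [div_div, div_le_div_iff₀ (by positivity) h0]
    have : opNorm A⁻¹ * (1 / Real.sqrt d) ≤ opNorm A⁻¹ * |t i| :=
      mul_le_mul_of_nonneg_left h1 h0.le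
    calc 1 * opNorm A⁻¹ = Real.sqrt d * (opNorm A⁻¹ * (1 / Real.sqrt d)) := by
          field_simp
      _ ≤ Real.sqrt d * (opNorm A⁻¹ * |t i|) := by
          apply mul_le_mul_of_nonneg_left this hsd.le
      _ = Real.sqrt d * (opNorm A⁻¹ * |t i|) := rfl
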